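/- arXiv:2003.03093 — 2 statements merged into one kernel-verified Lean document; each statement's English description precedes it below -/
import Mathlib

section
/- (Euclidean case of Proposition 4.1) Let n ≥ 2 and let Ω ⊂ ℝⁿ be a bounded open set with Lipschitz boundary. Let p ∈ ℝⁿ be the barycenter of ∂Ω with respect to H^{n−1}, i.e. ∫_{∂Ω} (x − p) dH^{n−1}(x) = 0. Then σ₁(Ω) ≤ n |Ω| / ∫_{∂Ω} |x − p|² dH^{n−1}(x), where |Ω| is the Lebesgue measure of Ω. -/
open MeasureTheory Metric Set Module

/-- A bounded open set `Ω ⊂ ℝⁿ` has Lipschitz boundary if near each boundary point, after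
choosing a unit direction `v`, the set `Ω` is locally the open subgraph
`{ y : f(y - ⟪y,v⟫ v) < ⟪y,v⟫ }` of a Lipschitz function `f`. -/
def HasLipschitzBoundary {n : ℕ} (Ω : Set (EuclideanSpace ℝ (Fin n))) : Prop :=
  ∀ x ∈ frontier Ω, ∃ (v : EuclideanSpace ℝ (Fin n)) (f : EuclideanSpace ℝ (Fin n) → ℝ)
    (K : NNReal) (U : Set (EuclideanSpace ℝ (Fin n))),
      ‖v‖ = 1 ∧ LipschitzWith K f ∧ IsOpen U ∧ x ∈ U ∧
      Ω ∩ U = {y ∈ U | f (y - (inner ℝ y v : ℝ) • v) < (inner ℝ y v : ℝ)}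

/-- The first nonzero Steklov eigenvalue of a bounded Lipschitz domain `Ω ⊂ ℝⁿ`, via the
variational characterization: the infimum of the Rayleigh quotients
`(∫_Ω |∇u|² dx) / (∫_{∂Ω} u² dH^{n-1})` over Lipschitz functions `u` with
`∫_{∂Ω} u dH^{n-1} = 0` and `∫_{∂Ω} u² dH^{n-1} > 0`. -/
noncomputable def steklovFirst {n : ℕ} (Ω : Set (EuclideanSpace ℝ (Fin n))) : ℝ :=
  sInf { q : ℝ | ∃ (u : EuclideanSpace ℝ (Fin n) → ℝ) (K : NNReal), LipschitzWith K u ∧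
    (∫ x in frontier Ω, u x ∂(μH[(n : ℝ) - 1])) = 0 ∧
    (0 < ∫ x in frontier Ω, (u x) ^ 2 ∂(μH[(n : ℝ) - 1])) ∧
    q = (∫ x in Ω, ‖fderiv ℝ u x‖ ^ 2) /
      ∫ x in frontier Ω, (u x) ^ 2 ∂(μH[(n : ℝ) - 1]) }


lemma hyperplane_hausdorff_lt_top (n : ℕ) (hn : 2 ≤ n) (v : EuclideanSpace ℝ (Fin n))
    (hv : ‖v‖ = 1) (R : ℝ) :
    μH[(n:ℝ)-1] ({z : EuclideanSpace ℝ (Fin n) | (inner ℝ z v : ℝ) = 0} ∩ closedBall 0 R) < ⊤ := by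
  have hv0 : v ≠ 0 := by intro h; rw [h, norm_zero] at hv; norm_num at hv
  haveI : Fact (finrank ℝ (EuclideanSpace ℝ (Fin n)) = (n-1) + 1) :=
    ⟨by simp [finrank_euclideanSpace_fin]; omega⟩
  set W := (ℝ ∙ v)ᗮ with hW
  have hrank : finrank ℝ W = n - 1 := Submodule.finrank_orthogonal_span_singleton hv0
  set C : Set W := Subtype.val ⁻¹' (closedBall (0 : EuclideanSpace ℝ (Fin n)) R) with hC
  have hCcomp : IsCompact C := by
    have : C = closedBall (0 : W) R := by
      ext w
      simp [hC, Metric.mem_closedBall, dist_eq_norm]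
    rw [this]
    exact isCompact_closedBall _ _
  have hsub : {z : EuclideanSpace ℝ (Fin n) | (inner ℝ z v : ℝ) = 0} ∩ closedBall 0 R
      ⊆ Subtype.val '' C := by
    rintro z ⟨hz1, hz2⟩
    have hzW : z ∈ W := by
      rw [hW, Submodule.mem_orthogonal_singleton_iff_inner_right]
      rw [real_inner_comm]
      exact hz1
    exact ⟨⟨z, hzW⟩, hz2, rfl⟩
  have hd : (0:ℝ) ≤ (n:ℝ) - 1 := by
    have : (2:ℝ) ≤ n := by exact_mod_cast hn
    linarith
  refine lt_of_le_of_lt (measure_mono hsub) (lt_of_le_of_lt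
    ((isometry_subtype_coe.lipschitz).hausdorffMeasure_image_le hd C) ?_)
  rw [ENNReal.coe_one, ENNReal.one_rpow, one_mul]
  have hcast : ((n:ℝ) - 1) = ((finrank ℝ W : ℕ) : ℝ) := by
    rw [hrank]
    push_cast [Nat.cast_sub (by omega : 1 ≤ n)]
    ring
  rw [hcast]
  exact hCcomp.measure_lt_top

lemma frontier_hausdorff_lt_top (n : ℕ) (hn : 2 ≤ n) (Ω : Set (EuclideanSpace ℝ (Fin n)))
    (hopen : IsOpen Ω) (hbounded : Bornology.IsBounded Ω) (hlip : HasLipschitzBoundary Ω) :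
    μH[(n:ℝ)-1] (frontier Ω) < ⊤ := by
  have hd : (0:ℝ) ≤ (n:ℝ) - 1 := by
    have : (2:ℝ) ≤ n := by exact_mod_cast hn
    linarith
  have hfb : Bornology.IsBounded (frontier Ω) :=
    hbounded.closure.subset frontier_subset_closure
  obtain ⟨R, hR⟩ := hfb.subset_closedBall 0
  have hfc : IsCompact (frontier Ω) :=
    Metric.isCompact_of_isClosed_isBounded isClosed_frontier hfb
  -- local estimate
  have key : ∀ x ∈ frontier Ω, ∃ U, IsOpen U ∧ x ∈ U ∧
      μH[(n:ℝ)-1] (frontier Ω ∩ U) < ⊤ := by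
    intro x hx
    obtain ⟨v, f, K, U, hv, hf, hU, hxU, hΩU⟩ := hlip x hx
    refine ⟨U, hU, hxU, ?_⟩
    set π : EuclideanSpace ℝ (Fin n) → EuclideanSpace ℝ (Fin n) :=
      fun z => z - (inner ℝ z v : ℝ) • v with hπ
    set Ψ : EuclideanSpace ℝ (Fin n) → EuclideanSpace ℝ (Fin n) :=
      fun z => π z + f (π z) • v with hΨ
    -- frontier ∩ U lies on the graph
    have hgraph : ∀ y ∈ frontier Ω ∩ U, f (π y) = (inner ℝ y v : ℝ) := by
      rintro y ⟨hyF, hyU⟩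
      have hyNΩ : y ∉ Ω := fun h => (hopen.frontier_eq ▸ hyF).2 h
      have hycl : y ∈ closure Ω := frontier_subset_closure hyF
      rcases lt_trichotomy (f (π y)) (inner ℝ y v : ℝ) with h | h | h
      · exfalso
        have : y ∈ Ω ∩ U := by rw [hΩU]; exact ⟨hyU, h⟩
        exact hyNΩ this.1
      · exact h
      · -- open nbhd avoiding Ω
        exfalso
        set V : Set (EuclideanSpace ℝ (Fin n)) :=
          U ∩ {z | (inner ℝ z v : ℝ) < f (π z)} with hV
        have hVopen : IsOpen V := by
          refine hU.inter (isOpen_lt ?_ ?_)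
          · exact (continuous_id.inner continuous_const)
          · exact hf.continuous.comp (continuous_id.sub
              ((continuous_id.inner (𝕜 := ℝ) continuous_const).smul continuous_const))
        have hyV : y ∈ V := ⟨hyU, h⟩
        have hdisj : V ∩ Ω = ∅ := by
          ext z; simp only [mem_inter_iff, mem_empty_iff_false, iff_false]
          rintro ⟨⟨hzU, hz⟩, hzΩ⟩
          have : z ∈ Ω ∩ U := ⟨hzΩ, hzU⟩
          rw [hΩU] at this
          exact absurd this.2 (not_lt.mpr (le_of_lt hz))
        have hne := mem_closure_iff.mp hycl V hVopen hyV
        rw [hdisj] at hne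
        exact Set.not_nonempty_empty hne
    -- the hyperplane piece
    set H : Set (EuclideanSpace ℝ (Fin n)) := {z | (inner ℝ z v : ℝ) = 0} with hH
    have hππ : ∀ z, (inner ℝ z v : ℝ) = 0 → π z = z := by
      intro z hz
      simp only [hπ]
      rw [hz, zero_smul, sub_zero]
    have hπmem : ∀ y : EuclideanSpace ℝ (Fin n), (inner ℝ (π y) v : ℝ) = 0 := by
      intro y
      have hvv : (inner ℝ v v : ℝ) = 1 := by
        rw [real_inner_self_eq_norm_sq, hv]; norm_num
      show (inner ℝ (y - (inner ℝ y v : ℝ) • v) v : ℝ) = 0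
      rw [inner_sub_left, real_inner_smul_left, hvv, mul_one, sub_self]
    have hπnorm : ∀ y : EuclideanSpace ℝ (Fin n), ‖π y‖ ≤ ‖y‖ := by
      intro y
      have hyd : y = π y + (inner ℝ y v : ℝ) • v := by simp [hπ]
      have horth : (inner ℝ (π y) ((inner ℝ y v : ℝ) • v) : ℝ) = 0 := by
        rw [real_inner_smul_right, hπmem y, mul_zero]
      have hsq : ‖y‖^2 = ‖π y‖^2 + ‖(inner ℝ y v : ℝ) • v‖^2 := by
        conv_lhs => rw [hyd]
        rw [norm_add_sq_real, horth]
        ring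
      nlinarith [norm_nonneg (π y), norm_nonneg y, sq_nonneg ‖(inner ℝ y v : ℝ) • v‖]
    have hsub : frontier Ω ∩ U ⊆ Ψ '' (H ∩ closedBall 0 R) := by
      rintro y hy
      refine ⟨π y, ⟨hπmem y, ?_⟩, ?_⟩
      · have hyR : ‖y‖ ≤ R := by
          have := hR hy.1
          simpa [Metric.mem_closedBall, dist_eq_norm] using this
        simp only [Metric.mem_closedBall, dist_zero_right]
        exact le_trans (hπnorm y) hyR
      · have h1 : π (π y) = π y := hππ _ (hπmem y)
        have h2 : f (π y) = (inner ℝ y v : ℝ) := hgraph y hy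
        simp only [hΨ, h1, h2]
        simp only [hπ]
        abel
    -- Ψ is Lipschitz
    have hπlip : ∀ a b : EuclideanSpace ℝ (Fin n), ‖π a - π b‖ ≤ 2 * ‖a - b‖ := by
      intro a b
      have : π a - π b = (a - b) - ((inner ℝ a v : ℝ) - (inner ℝ b v : ℝ)) • v := by
        simp only [hπ, sub_smul]
        abel
      rw [this]
      have hin : |(inner ℝ a v : ℝ) - (inner ℝ b v : ℝ)| ≤ ‖a - b‖ := by
        rw [← inner_sub_left]
        calc |(inner ℝ (a - b) v : ℝ)| ≤ ‖a - b‖ * ‖v‖ := abs_real_inner_le_norm _ _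
          _ = ‖a - b‖ := by rw [hv, mul_one]
      calc ‖(a - b) - ((inner ℝ a v : ℝ) - (inner ℝ b v : ℝ)) • v‖
          ≤ ‖a - b‖ + ‖((inner ℝ a v : ℝ) - (inner ℝ b v : ℝ)) • v‖ := norm_sub_le _ _
        _ = ‖a - b‖ + |(inner ℝ a v : ℝ) - (inner ℝ b v : ℝ)| * ‖v‖ := by
            rw [norm_smul, Real.norm_eq_abs]
        _ ≤ ‖a - b‖ + ‖a - b‖ * 1 := by
            rw [hv]
            exact add_le_add le_rfl (mul_le_mul_of_nonneg_right hin zero_le_one)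
        _ = 2 * ‖a - b‖ := by ring
    have hΨlip : LipschitzWith (2 * (1 + K)) Ψ := by
      refine LipschitzWith.of_dist_le_mul fun a b => ?_
      rw [dist_eq_norm, dist_eq_norm]
      have hfd : |f (π a) - f (π b)| ≤ (K : ℝ) * ‖π a - π b‖ := by
        have := hf.dist_le_mul (π a) (π b)
        rwa [Real.dist_eq, dist_eq_norm] at this
      have : Ψ a - Ψ b = (π a - π b) + (f (π a) - f (π b)) • v := by
        simp only [hΨ, sub_smul]
        abel
      rw [this]
      calc ‖(π a - π b) + (f (π a) - f (π b)) • v‖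
          ≤ ‖π a - π b‖ + ‖(f (π a) - f (π b)) • v‖ := norm_add_le _ _
        _ = ‖π a - π b‖ + |f (π a) - f (π b)| * ‖v‖ := by rw [norm_smul, Real.norm_eq_abs]
        _ ≤ 2 * ‖a - b‖ + ((K : ℝ) * (2 * ‖a - b‖)) * 1 := by
            rw [hv]
            refine add_le_add (hπlip a b) (mul_le_mul_of_nonneg_right ?_ zero_le_one)
            exact le_trans hfd (mul_le_mul_of_nonneg_left (hπlip a b) K.2)
        _ = ((2 * (1 + K) : NNReal) : ℝ) * ‖a - b‖ := by push_cast; ring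
    refine lt_of_le_of_lt (measure_mono hsub) (lt_of_le_of_lt
      (hΨlip.hausdorffMeasure_image_le hd _) ?_)
    exact ENNReal.mul_lt_top
      (ENNReal.rpow_lt_top_of_nonneg hd ENNReal.coe_ne_top)
      (hyperplane_hausdorff_lt_top n hn v hv R)
  -- compactness argument
  refine hfc.induction_on (p := fun t => μH[(n:ℝ)-1] t < ⊤) ?_ ?_ ?_ ?_
  · simp
  · exact fun s t hst ht => lt_of_le_of_lt (measure_mono hst) ht
  · exact fun s t hs ht => lt_of_le_of_lt (measure_union_le s t) (ENNReal.add_lt_top.mpr ⟨hs, ht⟩)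
  · intro x hx
    obtain ⟨U, hUopen, hxU, hU⟩ := key x hx
    exact ⟨frontier Ω ∩ U, inter_mem_nhdsWithin _ (hUopen.mem_nhds hxU), hU⟩

lemma aux_integrableOn {n : ℕ} {s : Set (EuclideanSpace ℝ (Fin n))} {d : ℝ}
    (hs : IsCompact s) (hfin : μH[d] s < ⊤) {F : Type*} [NormedAddCommGroup F]
    (g : EuclideanSpace ℝ (Fin n) → F) (hg : Continuous g) :
    IntegrableOn g s μH[d] := by
  haveI : IsFiniteMeasure ((μH[d] :
      Measure (EuclideanSpace ℝ (Fin n))).restrict s) :=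
    ⟨by rwa [Measure.restrict_apply_univ]⟩
  obtain ⟨C, hC⟩ := hs.exists_bound_of_continuousOn hg.continuousOn
  exact ⟨hg.aestronglyMeasurable,
    HasFiniteIntegral.of_bounded (C := C) (ae_restrict_of_forall_mem
      hs.isClosed.measurableSet hC)⟩


set_option maxHeartbeats 1000000 in
/-- Euclidean case of Proposition 4.1: if `p` is the barycenter of `∂Ω` with respect to
`H^{n-1}`, then `σ₁(Ω) ≤ n |Ω| / ∫_{∂Ω} |x - p|² dH^{n-1}`. -/
theorem steklov_le_moment_bound
    (n : ℕ) (hn : 2 ≤ n) (Ω : Set (EuclideanSpace ℝ (Fin n)))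
    (hopen : IsOpen Ω) (hbounded : Bornology.IsBounded Ω)
    (hlip : HasLipschitzBoundary Ω) (p : EuclideanSpace ℝ (Fin n))
    (hbary : (∫ x in frontier Ω, (x - p) ∂(μH[(n : ℝ) - 1])) = 0) :
    steklovFirst Ω ≤
      (n : ℝ) * (volume Ω).toReal /
        ∫ x in frontier Ω, ‖x - p‖ ^ 2 ∂(μH[(n : ℝ) - 1]) := by
  have hfin : μH[(n:ℝ)-1] (frontier Ω) < ⊤ :=
    frontier_hausdorff_lt_top n hn Ω hopen hbounded hlip
  have hfc : IsCompact (frontier Ω) :=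
    Metric.isCompact_of_isClosed_isBounded isClosed_frontier
      (hbounded.closure.subset frontier_subset_closure)
  -- integrability facts
  have hgint : IntegrableOn (fun x => x - p) (frontier Ω) μH[(n:ℝ)-1] :=
    aux_integrableOn hfc hfin _ (continuous_id.sub continuous_const)
  have hnormsq_int : IntegrableOn (fun x => ‖x - p‖ ^ 2) (frontier Ω) μH[(n:ℝ)-1] :=
    aux_integrableOn hfc hfin _ (((continuous_id.sub continuous_const).norm).pow 2)
  -- coordinate test functions
  set L : Fin n → (EuclideanSpace ℝ (Fin n) →L[ℝ] ℝ) := fun i => EuclideanSpace.proj i with hL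
  set u : Fin n → EuclideanSpace ℝ (Fin n) → ℝ := fun i x => L i (x - p) with hu
  have hu_int2 : ∀ i, IntegrableOn (fun x => (u i x) ^ 2) (frontier Ω) μH[(n:ℝ)-1] :=
    fun i => aux_integrableOn hfc hfin _
      ((((L i).continuous.comp (continuous_id.sub continuous_const)).pow 2))
  set S : ℝ := ∫ x in frontier Ω, ‖x - p‖ ^ 2 ∂(μH[(n : ℝ) - 1]) with hS
  set I : Fin n → ℝ := fun i => ∫ x in frontier Ω, (u i x) ^ 2 ∂(μH[(n : ℝ) - 1]) with hI
  have hLnorm : ∀ i, ‖L i‖ ≤ 1 := by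
    intro i
    refine ContinuousLinearMap.opNorm_le_bound _ zero_le_one fun x => ?_
    rw [one_mul]
    have h0 : ‖(L i) x‖ = ‖x i‖ := rfl
    rw [h0]
    have hx2 : ‖x i‖ ^ 2 ≤ ‖x‖ ^ 2 := by
      rw [EuclideanSpace.norm_eq, Real.sq_sqrt (Finset.sum_nonneg fun j _ => sq_nonneg _)]
      exact Finset.single_le_sum (fun j _ => sq_nonneg ‖x j‖) (Finset.mem_univ i)
    nlinarith [norm_nonneg (x i), norm_nonneg x]
  have hsum : ∑ i, I i = S := by
    rw [hI, hS, ← integral_finset_sum _ (fun i _ => hu_int2 i)]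
    refine setIntegral_congr_fun hfc.isClosed.measurableSet fun x _ => ?_
    have : ‖x - p‖ ^ 2 = ∑ i, ‖(x - p) i‖ ^ 2 := by
      rw [EuclideanSpace.norm_eq]
      rw [Real.sq_sqrt (Finset.sum_nonneg fun i _ => sq_nonneg _)]
    rw [this]
    refine Finset.sum_congr rfl fun i _ => ?_
    simp [hu, hL, Real.norm_eq_abs, sq_abs]
  have hSnonneg : 0 ≤ S := integral_nonneg fun x => sq_nonneg _
  rcases eq_or_lt_of_le hSnonneg with hS0 | hSpos
  · -- degenerate case: μH restricted to the frontier vanishes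
    have hzero : (μH[(n:ℝ)-1] : Measure (EuclideanSpace ℝ (Fin n))).restrict (frontier Ω)
        = 0 := by
      haveI : NullSingletonClass (μH[(n:ℝ)-1] : Measure (EuclideanSpace ℝ (Fin n))) := by
        refine MeasureTheory.Measure.noAtoms_hausdorff _ ?_
        have h2 : (2:ℝ) ≤ n := by exact_mod_cast hn
        linarith
      have hae : (fun x => ‖x - p‖ ^ 2) =ᵐ[(μH[(n:ℝ)-1] :
          Measure (EuclideanSpace ℝ (Fin n))).restrict (frontier Ω)] 0 := by
        rw [← integral_eq_zero_iff_of_nonneg (fun x => sq_nonneg _) hnormsq_int]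
        exact hS0.symm
      have hae2 : ∀ᵐ x ∂((μH[(n:ℝ)-1] :
          Measure (EuclideanSpace ℝ (Fin n))).restrict (frontier Ω)), x = p := by
        filter_upwards [hae] with x hx
        have : ‖x - p‖ = 0 := by
          have := hx
          simp only [Pi.zero_apply] at this
          nlinarith [norm_nonneg (x - p)]
        rw [norm_eq_zero, sub_eq_zero] at this
        exact this
      have : ((μH[(n:ℝ)-1] : Measure (EuclideanSpace ℝ (Fin n))).restrict (frontier Ω))
          {x | x ≠ p} = 0 := by
        apply measure_eq_zero_iff_ae_notMem.mpr
        filter_upwards [hae2] with x hx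
        simp [hx]
      have huniv : ((μH[(n:ℝ)-1] : Measure (EuclideanSpace ℝ (Fin n))).restrict (frontier Ω))
          univ = 0 := by
        have h1 : ((μH[(n:ℝ)-1] : Measure (EuclideanSpace ℝ (Fin n))).restrict (frontier Ω))
            {p} = 0 := le_antisymm
          (le_trans (Measure.restrict_apply_le _ _) (by simp [measure_singleton])) zero_le
        have hcover : (univ : Set (EuclideanSpace ℝ (Fin n))) ⊆ {x | x ≠ p} ∪ {p} := by
          intro x _
          by_cases h : x = p
          · exact Or.inr h
          · exact Or.inl h
        refine le_antisymm ?_ zero_le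
        refine le_trans (measure_mono hcover) (le_trans (measure_union_le _ _) ?_)
        rw [this, h1, add_zero]
      exact Measure.measure_univ_eq_zero.mp huniv
    have hempty : { q : ℝ | ∃ (w : EuclideanSpace ℝ (Fin n) → ℝ) (K : NNReal),
        LipschitzWith K w ∧
        (∫ x in frontier Ω, w x ∂(μH[(n : ℝ) - 1])) = 0 ∧
        (0 < ∫ x in frontier Ω, (w x) ^ 2 ∂(μH[(n : ℝ) - 1])) ∧
        q = (∫ x in Ω, ‖fderiv ℝ w x‖ ^ 2) /
          ∫ x in frontier Ω, (w x) ^ 2 ∂(μH[(n : ℝ) - 1]) } = ∅ := by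
      ext q
      simp only [mem_setOf_eq, mem_empty_iff_false, iff_false, not_exists]
      rintro w K ⟨-, -, hpos, -⟩
      rw [hzero, integral_zero_measure] at hpos
      exact lt_irrefl _ hpos
    rw [steklovFirst, hempty, Real.sInf_empty, ← hS0, div_zero]
  · -- main case
    obtain ⟨i, -, hmax⟩ := Finset.exists_max_image (Finset.univ : Finset (Fin n)) I
      ⟨⟨0, by omega⟩, Finset.mem_univ _⟩
    have hnpos : (0:ℝ) < n := by positivity
    have hSle : S ≤ n * I i := by
      rw [← hsum]
      calc ∑ j, I j ≤ ∑ _j : Fin n, I i :=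
            Finset.sum_le_sum fun j _ => hmax j (Finset.mem_univ j)
        _ = n * I i := by
            rw [Finset.sum_const, Finset.card_univ, Fintype.card_fin, nsmul_eq_mul]
    have hIpos : 0 < I i := by
      have h0 : 0 < (n:ℝ) * I i := lt_of_lt_of_le hSpos hSle
      rcases mul_pos_iff.mp h0 with ⟨-, h⟩ | ⟨h, -⟩
      · exact h
      · linarith
    have hfd : ∀ x, fderiv ℝ (u i) x = L i := by
      intro x
      have he : u i = fun y => L i y - L i p := by
        funext y
        simp [hu, map_sub]
      rw [he]
      exact (((L i).hasFDerivAt).sub_const (L i p)).fderiv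
    set A : ℝ := ∫ x in Ω, ‖fderiv ℝ (u i) x‖ ^ 2 with hA
    have hAle : A ≤ (volume Ω).toReal := by
      have he : A = (volume Ω).toReal * ‖L i‖ ^ 2 := by
        rw [hA]
        have : (fun x => ‖fderiv ℝ (u i) x‖ ^ 2) = fun _ => ‖L i‖ ^ 2 := by
          funext x; rw [hfd]
        rw [this, setIntegral_const, smul_eq_mul, measureReal_def]
      rw [he]
      have h1 : ‖L i‖ ^ 2 ≤ 1 := by
        calc ‖L i‖ ^ 2 ≤ 1 ^ 2 := pow_le_pow_left₀ (norm_nonneg _) (hLnorm i) 2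
          _ = 1 := one_pow 2
      exact mul_le_of_le_one_right ENNReal.toReal_nonneg h1
    have hAnonneg : 0 ≤ A := integral_nonneg fun x => sq_nonneg _
    have hsub1 : LipschitzWith 1 (fun x : EuclideanSpace ℝ (Fin n) => x - p) :=
      LipschitzWith.of_dist_le_mul fun a b => by
        rw [NNReal.coe_one, one_mul, dist_sub_right]
    have humem : A / I i ∈ { q : ℝ | ∃ (w : EuclideanSpace ℝ (Fin n) → ℝ) (K : NNReal),
        LipschitzWith K w ∧
        (∫ x in frontier Ω, w x ∂(μH[(n : ℝ) - 1])) = 0 ∧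
        (0 < ∫ x in frontier Ω, (w x) ^ 2 ∂(μH[(n : ℝ) - 1])) ∧
        q = (∫ x in Ω, ‖fderiv ℝ w x‖ ^ 2) /
          ∫ x in frontier Ω, (w x) ^ 2 ∂(μH[(n : ℝ) - 1]) } := by
      refine ⟨u i, ‖L i‖₊ * 1, (L i).lipschitz.comp hsub1, ?_, hIpos, rfl⟩
      have hcc := (L i).integral_comp_comm hgint
      rw [hbary, map_zero] at hcc
      exact hcc
    have hbdd : BddBelow { q : ℝ | ∃ (w : EuclideanSpace ℝ (Fin n) → ℝ) (K : NNReal),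
        LipschitzWith K w ∧
        (∫ x in frontier Ω, w x ∂(μH[(n : ℝ) - 1])) = 0 ∧
        (0 < ∫ x in frontier Ω, (w x) ^ 2 ∂(μH[(n : ℝ) - 1])) ∧
        q = (∫ x in Ω, ‖fderiv ℝ w x‖ ^ 2) /
          ∫ x in frontier Ω, (w x) ^ 2 ∂(μH[(n : ℝ) - 1]) } := by
      refine ⟨0, fun q hq => ?_⟩
      obtain ⟨w, K, hw, h0, hpos, rfl⟩ := hq
      exact div_nonneg (integral_nonneg fun x => sq_nonneg _) (le_of_lt hpos)
    refine le_trans (csInf_le hbdd humem) ?_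
    rw [div_le_div_iff₀ hIpos hSpos]
    have hvol : (0:ℝ) ≤ (volume Ω).toReal := ENNReal.toReal_nonneg
    nlinarith [mul_le_mul_of_nonneg_right hAle (le_of_lt hSpos),
      mul_le_mul_of_nonneg_left hSle hvol]
end

section
/- (Positivity of the radial Steklov eigenfunction profile) Let κ ≤ 0, let n ≥ 2 be an integer, and let F : [0,∞) → ℝ solve the initial value problem F''(r) + (n−1)(sn_κ'(r)/sn_κ(r)) F'(r) − ((n−1)/sn_κ(r)²) F(r) = 0 on (0,∞) with F(0) = 0 and F'(0) = 1. Then F(r) > 0 for every r > 0. -/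
open Set Filter

/-- The comparison sine function `sn_κ` for `κ ≤ 0`: `sn_0(t) = t` and
`sn_κ(t) = sinh(√(-κ) t)/√(-κ)` for `κ < 0`. -/
noncomputable def snk (κ : ℝ) (t : ℝ) : ℝ :=
  if κ = 0 then t else Real.sinh (Real.sqrt (-κ) * t) / Real.sqrt (-κ)

lemma snk_pos {κ : ℝ} (hκ : κ ≤ 0) {r : ℝ} (hr : 0 < r) : 0 < snk κ r := by
  unfold snk
  split_ifs with h
  · exact hr
  · have hκ' : 0 < -κ := by have := lt_of_le_of_ne hκ h; linarith
    have hs : 0 < Real.sqrt (-κ) := Real.sqrt_pos.mpr hκ'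
    exact div_pos (by positivity) hs

lemma snk_differentiableAt (κ : ℝ) (r : ℝ) : DifferentiableAt ℝ (snk κ) r := by
  have : snk κ = fun t => if κ = 0 then t else Real.sinh (Real.sqrt (-κ) * t) / Real.sqrt (-κ) := rfl
  rw [this]
  split_ifs with h
  · exact differentiableAt_id
  · exact (((differentiableAt_id.const_mul _).sinh).div_const _)

/-- Positivity of the radial Steklov eigenfunction profile: if `F` solves
`F'' + (n-1)(sn_κ'/sn_κ) F' - ((n-1)/sn_κ²) F = 0` on `(0,∞)` with `F(0)=0`, `F'(0)=1`
(right derivative), then `F > 0` on `(0,∞)`. -/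
theorem steklov_radial_profile_pos
    (κ : ℝ) (hκ : κ ≤ 0) (n : ℕ) (hn : 2 ≤ n) (F : ℝ → ℝ)
    (hFc : ContinuousOn F (Ici 0))
    (hF2 : ContDiffOn ℝ 2 F (Ioi 0))
    (hF0 : F 0 = 0)
    (hF'0 : HasDerivWithinAt F 1 (Ici 0) 0)
    (hODE : ∀ r > 0, deriv (deriv F) r
      + ((n : ℝ) - 1) * (deriv (snk κ) r / snk κ r) * deriv F r
      - (((n : ℝ) - 1) / (snk κ r) ^ 2) * F r = 0) :
    ∀ r > 0, 0 < F r := by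
  obtain ⟨k, rfl⟩ : ∃ k, n = k + 2 := ⟨n - 2, by omega⟩
  -- derivatives of F on (0,∞)
  have hF1 : ∀ r ∈ Ioi (0:ℝ), HasDerivAt F (deriv F r) r := by
    intro r hr
    exact ((hF2.differentiableOn (by norm_num)).differentiableAt
      (Ioi_mem_nhds hr)).hasDerivAt
  have hDF2 : ContDiffOn ℝ 1 (deriv F) (Ioi 0) :=
    hF2.deriv_of_isOpen isOpen_Ioi (by norm_num)
  have hF2' : ∀ r ∈ Ioi (0:ℝ), HasDerivAt (deriv F) (deriv (deriv F) r) r := by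
    intro r hr
    exact ((hDF2.differentiableOn (by norm_num)).differentiableAt
      (Ioi_mem_nhds hr)).hasDerivAt
  -- g = sn^(k+1) * F'
  set g : ℝ → ℝ := fun r => snk κ r ^ (k+1) * deriv F r with hgdef
  have hgd : ∀ r ∈ Ioi (0:ℝ), HasDerivAt g
      ((((k:ℝ)+1) * snk κ r ^ k / snk κ r) * F r) r := by
    intro r hr
    have hsn := snk_pos hκ hr
    have hsn0 : snk κ r ≠ 0 := hsn.ne'
    have h1 := (((snk_differentiableAt κ r).hasDerivAt).pow (k+1)).mul (hF2' r hr)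
    refine (h1.congr_deriv ?_ : HasDerivAt g _ r)
    symm
    have hode := hODE r hr
    have hcast : (((k:ℕ) + 2 : ℕ) : ℝ) - 1 = (k:ℝ) + 1 := by push_cast; ring
    rw [hcast] at hode
    have hF'' : deriv (deriv F) r =
        (((k:ℝ)+1) / (snk κ r)^2) * F r
          - ((k:ℝ)+1) * (deriv (snk κ) r / snk κ r) * deriv F r := by linarith
    rw [hF'']
    simp only [Nat.add_sub_cancel, Nat.cast_add, Nat.cast_one, Pi.pow_apply]
    field_simp
    ring
  -- positivity of F near 0
  have hslope : Tendsto (slope F 0) (nhdsWithin 0 (Ioi 0)) (nhds 1) := by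
    have := hasDerivWithinAt_iff_tendsto_slope.mp hF'0
    rwa [Ici_sdiff_left] at this
  have hev : ∀ᶠ r in nhdsWithin (0:ℝ) (Ioi 0), 0 < F r := by
    filter_upwards [hslope.eventually (eventually_gt_nhds (by norm_num : (0:ℝ) < 1)),
      self_mem_nhdsWithin] with r h1 h2
    have hrpos : (0:ℝ) < r := h2
    have hs : slope F 0 r = F r / r := by
      rw [slope_def_field, hF0]; ring_nf
    rw [hs] at h1
    have : F r = (F r / r) * r := (div_mul_cancel₀ _ hrpos.ne').symm
    rw [this]; exact mul_pos h1 hrpos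
  obtain ⟨δ, hδpos, hδ⟩ : ∃ δ > (0:ℝ), ∀ r ∈ Ioc (0:ℝ) δ, 0 < F r := by
    rcases mem_nhdsGT_iff_exists_Ioc_subset.mp hev with ⟨u, hu, hsub⟩
    exact ⟨u, hu, fun r hr => hsub hr⟩
  -- contradiction argument
  by_contra hcon
  push_neg at hcon
  obtain ⟨r₁, hr₁pos, hr₁⟩ := hcon
  set S : Set ℝ := {r : ℝ | δ ≤ r ∧ F r ≤ 0} with hSdef
  have hmemS : ∀ r, 0 < r → F r ≤ 0 → r ∈ S := by
    intro r hr hFr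
    refine ⟨?_, hFr⟩
    by_contra h
    push_neg at h
    exact absurd hFr (not_le.mpr (hδ r ⟨hr, h.le⟩))
  have hSne : S.Nonempty := ⟨r₁, hmemS r₁ hr₁pos hr₁⟩
  have hSbdd : BddBelow S := ⟨δ, fun x hx => hx.1⟩
  -- S is closed
  have hFcont : ∀ r : ℝ, 0 < r → ContinuousAt F r := by
    intro r hr
    exact (hF1 r hr).differentiableAt.continuousAt
  have hSclosed : IsClosed S := by
    have hG : Continuous (F ∘ fun r : ℝ => max r δ) := by
      refine ContinuousOn.comp_continuous (s := Ici δ) ?_ (continuous_id'.max continuous_const) ?_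
      · exact fun x hx => (hFcont x (lt_of_lt_of_le hδpos hx)).continuousWithinAt
      · exact fun x => show δ ≤ max x δ from le_max_right _ _
    have : S = Ici δ ∩ (F ∘ fun r : ℝ => max r δ) ⁻¹' Iic 0 := by
      ext r
      simp only [hSdef, mem_setOf_eq, mem_inter_iff, mem_Ici, mem_preimage, Function.comp_apply,
        mem_Iic]
      constructor
      · rintro ⟨h1, h2⟩; exact ⟨h1, by rwa [max_eq_left h1]⟩
      · rintro ⟨h1, h2⟩; exact ⟨h1, by rwa [max_eq_left h1] at h2⟩
    rw [this]
    exact isClosed_Ici.inter (isClosed_Iic.preimage hG)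
  set r₀ : ℝ := sInf S with hr₀def
  have hr₀mem : r₀ ∈ S := hSclosed.csInf_mem hSne hSbdd
  have hr₀δ : δ ≤ r₀ := hr₀mem.1
  have hr₀pos : 0 < r₀ := lt_of_lt_of_le hδpos hr₀δ
  have hFr₀ : F r₀ ≤ 0 := hr₀mem.2
  have hpos : ∀ r, 0 < r → r < r₀ → 0 < F r := by
    intro r h1 h2
    by_contra h
    push_neg at h
    exact absurd (csInf_le hSbdd (hmemS r h1 h)) (not_le.mpr h2)
  -- F' > 0 on (0, r₀)
  have hF'pos : ∀ a, 0 < a → a < r₀ → 0 < deriv F a := by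
    intro a ha har
    by_contra h
    push_neg at h
    have hF'neg : ∀ x ∈ Ioo (0:ℝ) a, deriv F x < 0 := by
      intro x hx
      have hxa : Icc x a ⊆ Ioi (0:ℝ) := fun y hy => lt_of_lt_of_le hx.1 hy.1
      have hmono : StrictMonoOn g (Icc x a) := by
        refine strictMonoOn_of_deriv_pos (convex_Icc _ _) ?_ ?_
        · exact fun y hy => (hgd y (hxa hy)).differentiableAt.continuousAt.continuousWithinAt
        · intro y hy
          rw [interior_Icc] at hy
          have hy0 : 0 < y := lt_trans hx.1 hy.1
          have hyr₀ : y < r₀ := lt_trans hy.2 har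
          rw [(hgd y hy0).deriv]
          have hsn := snk_pos hκ hy0
          have hFy := hpos y hy0 hyr₀
          have hc : (0:ℝ) < (k:ℝ)+1 := by positivity
          exact mul_pos (div_pos (by positivity) hsn) hFy
      have hglt : g x < g a :=
        hmono ⟨le_refl x, hx.2.le⟩ ⟨hx.2.le, le_refl a⟩ hx.2
      have hga : g a ≤ 0 := by
        have hsna := snk_pos hκ ha
        exact mul_nonpos_of_nonneg_of_nonpos (by positivity) h
      have hgx : g x < 0 := lt_of_lt_of_le hglt hga
      have hsnx := snk_pos hκ hx.1
      by_contra hcontra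
      push_neg at hcontra
      have : 0 ≤ g x := mul_nonneg (by positivity) hcontra
      linarith
    have hanti : StrictAntiOn F (Icc 0 a) := by
      refine strictAntiOn_of_deriv_neg (convex_Icc _ _) (hFc.mono Icc_subset_Ici_self) ?_
      rw [interior_Icc]
      exact hF'neg
    have hlt : F a < F 0 :=
      hanti (left_mem_Icc.mpr ha.le) (right_mem_Icc.mpr ha.le) ha
    have hFa := hpos a ha har
    rw [hF0] at hlt
    linarith
  -- final contradiction
  have hmono : StrictMonoOn F (Icc (r₀/2) r₀) := by
    refine strictMonoOn_of_deriv_pos (convex_Icc _ _)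
      (hFc.mono (fun x hx => le_trans (by linarith) hx.1)) ?_
    rw [interior_Icc]
    intro x hx
    exact hF'pos x (lt_trans (by linarith) hx.1) hx.2
  have h1 : F (r₀/2) < F r₀ :=
    hmono ⟨le_refl _, by linarith⟩ ⟨by linarith, le_refl _⟩ (by linarith)
  have h2 := hpos (r₀/2) (by linarith) (by linarith)
  linarith
end
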